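/- Let b and c be integers with c even, and let (α, β) be the unique pair of integers with 0 ≤ α ≤ 7 and α² − 14β = 14c − 3b². Then gcd(α,14) = gcd(b,14), and 14(14β − α²)/gcd(α,14)² = −14(14c − 3b²)/gcd(b,14)². -/

import Mathlib

private lemma gcd_emod14 (a : ℤ) : Int.gcd (a % 14) 14 = Int.gcd a 14 := by
  apply Nat.dvd_antisymm
  · rw [← Int.natCast_dvd_natCast]
    apply Int.dvd_coe_gcd _ (Int.gcd_dvd_right _ _)
    have h1 : (Int.gcd (a % 14) 14 : ℤ) ∣ a % 14 := Int.gcd_dvd_left _ _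
    have h2 : (Int.gcd (a % 14) 14 : ℤ) ∣ 14 := Int.gcd_dvd_right _ _
    have h := dvd_add h1 (h2.mul_right (a / 14))
    have he : a % 14 + 14 * (a / 14) = a := Int.emod_add_mul_ediv a 14
    rwa [he] at h
  · rw [← Int.natCast_dvd_natCast]
    apply Int.dvd_coe_gcd _ (Int.gcd_dvd_right _ _)
    have h1 : (Int.gcd a 14 : ℤ) ∣ a := Int.gcd_dvd_left _ _
    have h2 : (Int.gcd a 14 : ℤ) ∣ 14 := Int.gcd_dvd_right _ _
    have h := dvd_sub h1 (h2.mul_right (a / 14))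
    have he : a - 14 * (a / 14) = a % 14 := by omega
    rwa [he] at h

/-- For the unique normalized pair `(α,β)` with `0 ≤ α ≤ 7` and
`α² − 14β = 14c − 3b²`, one has `gcd(α,14) = gcd(b,14)` and
`14(14β − α²)/gcd(α,14)² = −14(14c − 3b²)/gcd(b,14)²`. -/
theorem stmt17 (b c : ℤ) (hc : Even c) (α β : ℤ) (h0 : 0 ≤ α) (h7 : α ≤ 7)
    (hd : α ^ 2 - 14 * β = 14 * c - 3 * b ^ 2) :
    Int.gcd α 14 = Int.gcd b 14 ∧
    14 * (14 * β - α ^ 2) / (Int.gcd α 14 : ℤ) ^ 2 =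
      -(14 * (14 * c - 3 * b ^ 2)) / (Int.gcd b 14 : ℤ) ^ 2 := by
  have hg : Int.gcd α 14 = Int.gcd b 14 := by
    rw [← gcd_emod14 b]
    have hb0 : 0 ≤ b % 14 := Int.emod_nonneg b (by norm_num)
    have hb14 : b % 14 < 14 := Int.emod_lt_of_pos b (by norm_num)
    have hkey : (α ^ 2 + 3 * (b % 14) ^ 2) % 14 = 0 := by
      have h1 : (α ^ 2 + 3 * b ^ 2) % 14 = 0 := by omega
      have : (b % 14) ^ 2 % 14 = b ^ 2 % 14 := by
        rw [pow_two, pow_two]; exact (Int.mul_emod b b 14).symm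
      omega
    set r := b % 14 with hr
    clear_value r
    clear hd hc hr
    interval_cases α <;> interval_cases r <;> revert hkey <;> decide
  refine ⟨hg, ?_⟩
  rw [hg]
  have : 14 * (14 * β - α ^ 2) = -(14 * (14 * c - 3 * b ^ 2)) := by linarith
  rw [this]
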